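/- (Rockafellar) A set A ⊆ ℝ^d × ℝ^d is cyclically monotone if and only if there exists a proper lower semicontinuous convex function φ : ℝ^d → ℝ ∪ {+∞} such that A ⊆ ∂φ, i.e., for every (x,y) ∈ A, y is a subgradient of φ at x. -/
import Mathlib


noncomputable section

open scoped RealInnerProductSpace

/-- `ℝ^d` with its Euclidean structure. -/
abbrev Euc (d : ℕ) : Type := EuclideanSpace ℝ (Fin d)

/-- A set `A ⊆ ℝ^d × ℝ^d` is cyclically monotone: for every `k ≥ 2` and points
`(x_1,y_1), …, (x_k,y_k) ∈ A`, `∑_{i=1}^k ⟨x_i − x_{i+1}, y_i⟩ ≥ 0` with `x_{k+1} = x_1`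
(indices taken cyclically in `Fin k`). -/
def CyclicallyMonotone {d : ℕ} (A : Set (Euc d × Euc d)) : Prop :=
  ∀ (k : ℕ) (hk : 2 ≤ k) (z : Fin k → Euc d × Euc d), (∀ i, z i ∈ A) →
    0 ≤ ∑ i : Fin k, ⟪(z i).1 - (z (i + ⟨1, by omega⟩)).1, (z i).2⟫

/-- Convexity for an extended-real-valued function `φ : ℝ^d → ℝ ∪ {±∞}`. -/
def ConvexEReal {d : ℕ} (φ : Euc d → EReal) : Prop :=
  ∀ x y : Euc d, ∀ t : ℝ, 0 ≤ t → t ≤ 1 →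
    φ ((1 - t) • x + t • y) ≤ ((1 - t : ℝ) : EReal) * φ x + ((t : ℝ) : EReal) * φ y

/-- `y` is a subgradient of `φ : ℝ^d → ℝ ∪ {+∞}` at `x`:
`φ(z) ≥ φ(x) + ⟨y, z − x⟩` for all `z`. -/
def IsSubgradientAt {d : ℕ} (φ : Euc d → EReal) (y x : Euc d) : Prop :=
  ∀ z : Euc d, φ x + ((⟪y, z - x⟫ : ℝ) : EReal) ≤ φ z

variable {d : ℕ}

lemma inner_flip (a b y : Euc d) : ⟪a - b, y⟫ = -⟪y, b - a⟫ := by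
  rw [real_inner_comm, inner_sub_right, inner_sub_right]; ring

def chainVal (n : ℕ) (f : Fin (n+1) → Euc d × Euc d) (x : Euc d) : ℝ :=
  (∑ i : Fin n, ⟪(f i.castSucc).2, (f i.succ).1 - (f i.castSucc).1⟫) +
    ⟪(f (Fin.last n)).2, x - (f (Fin.last n)).1⟫

lemma chainVal_snoc (n : ℕ) (f : Fin (n+1) → Euc d × Euc d) (q : Euc d × Euc d) (z : Euc d) :
    chainVal (n+1) (Fin.snoc f q) z = chainVal n f q.1 + ⟪q.2, z - q.1⟫ := by
  unfold chainVal
  rw [Fin.sum_univ_castSucc]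
  simp only [Fin.succ_castSucc, Fin.snoc_castSucc, Fin.succ_last, Fin.snoc_last]

lemma chainVal_affine (n : ℕ) (f : Fin (n+1) → Euc d × Euc d) (x y : Euc d) (t : ℝ) :
    chainVal n f ((1-t) • x + t • y) = (1-t) * chainVal n f x + t * chainVal n f y := by
  unfold chainVal
  have h : (1-t) • x + t • y - (f (Fin.last n)).1
      = (1-t) • (x - (f (Fin.last n)).1) + t • (y - (f (Fin.last n)).1) := by module
  rw [h, inner_add_right, real_inner_smul_right, real_inner_smul_right]; ring

lemma chainVal_continuous (n : ℕ) (f : Fin (n+1) → Euc d × Euc d) :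
    Continuous (chainVal n f) := by
  unfold chainVal
  exact continuous_const.add (continuous_const.inner (continuous_id.sub continuous_const))

lemma cycle_sum (n : ℕ) (f : Fin (n+2) → Euc d × Euc d) :
    ∑ i : Fin (n+2), ⟪(f i).1 - (f (i + 1)).1, (f i).2⟫ = - chainVal (n+1) f (f 0).1 := by
  rw [Fin.sum_univ_castSucc]
  simp only [Fin.coeSucc_eq_succ, Fin.last_add_one]
  simp only [inner_flip]
  rw [Finset.sum_neg_distrib]
  unfold chainVal
  ring

lemma chainVal_nonpos {A : Set (Euc d × Euc d)} (hA : CyclicallyMonotone A)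
    (n : ℕ) (f : Fin (n+1) → Euc d × Euc d) (hf : ∀ i, f i ∈ A) :
    chainVal n f (f 0).1 ≤ 0 := by
  cases n with
  | zero => simp [chainVal, Fin.last]
  | succ m =>
    have H := hA (m+2) (by omega) f hf
    have hrw : ∀ (h : 1 < m+2), (⟨1, h⟩ : Fin (m+2)) = 1 := fun h => by
      ext; simp [Fin.val_one]
    simp only [hrw] at H
    rw [cycle_sum] at H
    linarith

/-- Chains starting at `p₀` with all entries in `A`. -/
def Chains (A : Set (Euc d × Euc d)) (p₀ : Euc d × Euc d) : Type :=
  Σ n : ℕ, {f : Fin (n+1) → Euc d × Euc d // (∀ i, f i ∈ A) ∧ f 0 = p₀}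

def rock (A : Set (Euc d × Euc d)) (p₀ : Euc d × Euc d) (x : Euc d) : EReal :=
  ⨆ c : Chains A p₀, ((chainVal c.1 c.2.1 x : ℝ) : EReal)

lemma rock_lsc (A : Set (Euc d × Euc d)) (p₀ : Euc d × Euc d) :
    LowerSemicontinuous (rock A p₀) := by
  apply lowerSemicontinuous_iSup
  intro c
  exact (continuous_coe_real_ereal.comp (chainVal_continuous c.1 c.2.1)).lowerSemicontinuous

lemma rock_convex (A : Set (Euc d × Euc d)) (p₀ : Euc d × Euc d) :
    ConvexEReal (rock A p₀) := by
  intro x y t ht ht1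
  unfold rock
  apply iSup_le
  intro c
  rw [chainVal_affine, EReal.coe_add, EReal.coe_mul, EReal.coe_mul]
  exact add_le_add
    (mul_le_mul_of_nonneg_left
      (le_iSup (fun c : Chains A p₀ => ((chainVal c.1 c.2.1 x : ℝ) : EReal)) c)
      (by exact_mod_cast sub_nonneg.2 ht1))
    (mul_le_mul_of_nonneg_left
      (le_iSup (fun c : Chains A p₀ => ((chainVal c.1 c.2.1 y : ℝ) : EReal)) c)
      (by exact_mod_cast ht))

lemma rock_ne_bot (A : Set (Euc d × Euc d)) {p₀ : Euc d × Euc d} (hp₀ : p₀ ∈ A) (x : Euc d) :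
    rock A p₀ x ≠ ⊥ := by
  intro h
  have := le_iSup (fun c : Chains A p₀ => ((chainVal c.1 c.2.1 x : ℝ) : EReal))
    ⟨0, fun _ => p₀, fun _ => hp₀, rfl⟩
  unfold rock at h
  rw [h] at this
  exact EReal.coe_ne_bot _ (le_bot_iff.1 this)

lemma rock_base {A : Set (Euc d × Euc d)} (hA : CyclicallyMonotone A) (p₀ : Euc d × Euc d) :
    rock A p₀ p₀.1 ≤ 0 := by
  apply iSup_le
  intro c
  have h := chainVal_nonpos hA c.1 c.2.1 c.2.2.1
  rw [c.2.2.2] at h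
  exact_mod_cast h

lemma rock_subgrad (A : Set (Euc d × Euc d)) (p₀ : Euc d × Euc d) {p : Euc d × Euc d} (hp : p ∈ A) :
    IsSubgradientAt (rock A p₀) p.2 p.1 := by
  intro w
  unfold rock
  rw [← EReal.le_sub_iff_add_le (Or.inl (EReal.coe_ne_bot _)) (Or.inl (EReal.coe_ne_top _))]
  apply iSup_le
  intro c
  rw [EReal.le_sub_iff_add_le (Or.inl (EReal.coe_ne_bot _)) (Or.inl (EReal.coe_ne_top _)),
    ← EReal.coe_add, ← chainVal_snoc c.1 c.2.1 p w]
  have hmem : ∀ i, (Fin.snoc c.2.1 p : Fin (c.1+2) → Euc d × Euc d) i ∈ A := by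
    intro i
    refine Fin.lastCases ?_ ?_ i
    · rw [Fin.snoc_last]; exact hp
    · intro j; rw [Fin.snoc_castSucc]; exact c.2.2.1 j
  have hzero : (Fin.snoc c.2.1 p : Fin (c.1+2) → Euc d × Euc d) 0 = p₀ := by
    rw [show (0 : Fin (c.1+2)) = Fin.castSucc 0 from (Fin.castSucc_zero).symm,
      Fin.snoc_castSucc]
    exact c.2.2.2
  exact le_iSup (fun c : Chains A p₀ => ((chainVal c.1 c.2.1 w : ℝ) : EReal))
    ⟨c.1 + 1, Fin.snoc c.2.1 p, hmem, hzero⟩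

lemma cyc_aux {k : ℕ} [NeZero k] (z : Fin k → Euc d × Euc d) (e : Fin k) (r : Fin k → ℝ)
    (key : ∀ i j, r i - r j ≤ ⟪(z i).1 - (z j).1, (z i).2⟫) :
    0 ≤ ∑ i : Fin k, ⟪(z i).1 - (z (i + e)).1, (z i).2⟫ := by
  have h1 : ∑ i : Fin k, r (i + e) = ∑ i, r i :=
    Fintype.sum_equiv (Equiv.addRight e) _ _ (fun i => rfl)
  have h2 : ∑ i : Fin k, (r i - r (i + e)) ≤ ∑ i, ⟪(z i).1 - (z (i + e)).1, (z i).2⟫ :=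
    Finset.sum_le_sum fun i _ => key i (i + e)
  rw [Finset.sum_sub_distrib, h1, sub_self] at h2
  exact h2

lemma cyclic_of_subgrad {A : Set (Euc d × Euc d)} {φ : Euc d → EReal}
    (hbot : ∀ x, φ x ≠ ⊥) (hprop : ∃ x, φ x ≠ ⊤)
    (hsub : ∀ p ∈ A, IsSubgradientAt φ p.2 p.1) : CyclicallyMonotone A := by
  intro k hk z hz
  have : NeZero k := ⟨by omega⟩
  obtain ⟨w, hw⟩ := hprop
  have hne : ∀ i, φ (z i).1 ≠ ⊤ := by
    intro i htop
    have h := hsub (z i) (hz i) w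
    rw [htop, EReal.top_add_coe] at h
    exact hw (top_le_iff.1 h)
  have key : ∀ i j : Fin k, (φ (z i).1).toReal - (φ (z j).1).toReal
      ≤ ⟪(z i).1 - (z j).1, (z i).2⟫ := by
    intro i j
    have h := hsub (z i) (hz i) (z j).1
    rw [← EReal.coe_toReal (hne i) (hbot _), ← EReal.coe_toReal (hne j) (hbot _),
      ← EReal.coe_add, EReal.coe_le_coe_iff] at h
    rw [inner_flip]
    linarith
  exact cyc_aux z _ _ key

/-- **Rockafellar's theorem.** A set `A ⊆ ℝ^d × ℝ^d` is cyclically monotone if and only if there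
is a proper lower semicontinuous convex function `φ : ℝ^d → ℝ ∪ {+∞}` with `A ⊆ ∂φ`. -/
theorem rockafellar (d : ℕ) (A : Set (Euc d × Euc d)) :
    CyclicallyMonotone A ↔
      ∃ φ : Euc d → EReal,
        ConvexEReal φ ∧ LowerSemicontinuous φ ∧
        (∀ x, φ x ≠ ⊥) ∧ (∃ x, φ x ≠ ⊤) ∧
        ∀ p ∈ A, IsSubgradientAt φ p.2 p.1 := by
  constructor
  · intro hA
    rcases Set.eq_empty_or_nonempty A with hAe | ⟨p₀, hp₀⟩
    · refine ⟨fun _ => 0, ?_, lowerSemicontinuous_const, fun _ => by simp, ⟨0, by simp⟩, ?_⟩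
      · intro x y t ht ht1; simp
      · intro p hp; rw [hAe] at hp; exact absurd hp (Set.notMem_empty p)
    · exact ⟨rock A p₀, rock_convex A p₀, rock_lsc A p₀, rock_ne_bot A hp₀,
        ⟨p₀.1, ne_top_of_le_ne_top (by simp) (rock_base hA p₀)⟩,
        fun p hp => rock_subgrad A p₀ hp⟩
  · rintro ⟨φ, hconv, hlsc, hbot, hprop, hsub⟩
    exact cyclic_of_subgrad hbot hprop hsub
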